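/- For t ∈ ℂ, let p_t : ℂ → ℂ be the quadratic polynomial p_t(z) = z² + t, and let p_t^{∘n} denote its n-th iterate. There exists a constant C ≥ 0 such that for every t ∈ ℂ with |t| ≥ 3 and every u ∈ {0, 4}, the limit G_t(u) = lim_{n→∞} 2^{−n}·log⁺|p_t^{∘n}(u)| exists (log⁺ x = log(max(x,1))) and satisfies |G_t(u) − (1/2)·log|t|| ≤ C. -/

import Mathlib

open Filter

private lemma log_ratio_le {x y : ℝ} (hx : 0 < x) (hy : 0 < y)
    (h1 : y / 2 ≤ x) (h2 : x ≤ 2 * y) : |Real.log x - Real.log y| ≤ Real.log 2 := by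
  rw [abs_le]
  constructor
  · have h := Real.log_le_log (by positivity) h1
    rw [Real.log_div (ne_of_gt hy) (by norm_num)] at h
    linarith [h]
  · have h := Real.log_le_log hx h2
    rw [Real.log_mul (by norm_num) (ne_of_gt hy)] at h
    linarith [h]

private lemma green_step (t w : ℂ) (h3 : 3 ≤ ‖w‖)
    (ht : 2 * ‖t‖ ≤ ‖w‖ ^ 2) :
    3 ≤ ‖w ^ 2 + t‖ ∧ 2 * ‖t‖ ≤ ‖w ^ 2 + t‖ ^ 2 ∧
    ‖w‖ ^ 2 / 2 ≤ ‖w ^ 2 + t‖ ∧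
    ‖w ^ 2 + t‖ ≤ 2 * ‖w‖ ^ 2 := by
  have ht0 : 0 ≤ ‖t‖ := norm_nonneg t
  have hlow : ‖w ^ 2‖ - ‖t‖ ≤ ‖w ^ 2 + t‖ :=
    norm_sub_le_norm_add (w ^ 2) t
  have hup : ‖w ^ 2 + t‖ ≤ ‖w ^ 2‖ + ‖t‖ :=
    norm_add_le (w ^ 2) t
  rw [norm_pow] at hlow hup
  have hlow2 : ‖w‖ ^ 2 / 2 ≤ ‖w ^ 2 + t‖ := by linarith
  have h9 : 9 ≤ ‖w‖ ^ 2 := by nlinarith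
  refine ⟨by linarith, ?_, hlow2, by linarith⟩
  nlinarith [norm_nonneg (w ^ 2 + t)]

private lemma tail_conv (t u : ℂ) (N : ℕ)
    (h3 : 3 ≤ ‖(fun z => z ^ 2 + t)^[N] u‖)
    (ht : 2 * ‖t‖ ≤ ‖(fun z => z ^ 2 + t)^[N] u‖ ^ 2) :
    ∃ G : ℝ, Tendsto (fun n : ℕ => (1 / (2 : ℝ) ^ n) *
        Real.log (max (‖(fun z => z ^ 2 + t)^[n] u‖) 1)) atTop (nhds G) ∧
      |G - (1 / (2 : ℝ) ^ N) * Real.log (‖(fun z => z ^ 2 + t)^[N] u‖)| ≤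
        (1 / (2 : ℝ) ^ N) * Real.log 2 := by
  set f : ℂ → ℂ := fun z => z ^ 2 + t with hf
  set a : ℕ → ℝ := fun n => ‖f^[n] u‖ with ha
  set g : ℕ → ℝ := fun n => (1 / (2 : ℝ) ^ n) * Real.log (max (a n) 1) with hg
  have hiter : ∀ n : ℕ, a (n + 1) = ‖(f^[n] u) ^ 2 + t‖ := by
    intro n
    simp only [ha, Function.iterate_succ_apply', hf]
  -- invariance of the escape region
  have hinv : ∀ k : ℕ, 3 ≤ a (k + N) ∧ 2 * ‖t‖ ≤ a (k + N) ^ 2 := by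
    intro k
    induction k with
    | zero => simp only [Nat.zero_add]; exact ⟨h3, ht⟩
    | succ k ih =>
      have hs := green_step t (f^[k + N] u) ih.1 ih.2
      have hk : k + 1 + N = (k + N) + 1 := by omega
      rw [hk, hiter (k + N)]
      exact ⟨hs.1, hs.2.1⟩
  have hratio : ∀ k : ℕ, a (k + N) ^ 2 / 2 ≤ a (k + N + 1) ∧
      a (k + N + 1) ≤ 2 * a (k + N) ^ 2 := by
    intro k
    have hs := green_step t (f^[k + N] u) (hinv k).1 (hinv k).2
    rw [hiter (k + N)]
    exact ⟨hs.2.2.1, hs.2.2.2⟩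
  have hmax : ∀ k : ℕ, max (a (k + N)) 1 = a (k + N) := fun k =>
    max_eq_left (by linarith [(hinv k).1])
  have hapos : ∀ k : ℕ, 0 < a (k + N) := fun k => by linarith [(hinv k).1]
  -- geometric distance estimate
  have hdist : ∀ k : ℕ, dist (g (k + N)) (g (k + 1 + N)) ≤
      ((1 / (2 : ℝ) ^ (N + 1)) * Real.log 2) * (1 / 2) ^ k := by
    intro k
    have hk : k + 1 + N = (k + N) + 1 := by omega
    have h1 : max (a (k + N + 1)) 1 = a (k + N + 1) := by
      have h := hmax (k + 1)
      rwa [hk] at h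
    rw [Real.dist_eq, hg]
    simp only [hk, hmax k, h1]
    have hx : 0 < a (k + N + 1) := by
      have h := hapos (k + 1); rwa [hk] at h
    have hy : 0 < a (k + N) ^ 2 := pow_pos (hapos k) 2
    have hlr : |Real.log (a (k + N + 1)) - Real.log (a (k + N) ^ 2)| ≤ Real.log 2 :=
      log_ratio_le hx hy (hratio k).1 (hratio k).2
    rw [Real.log_pow] at hlr
    have key : (1 / (2 : ℝ) ^ (k + N)) * Real.log (a (k + N)) -
        (1 / (2 : ℝ) ^ (k + N + 1)) * Real.log (a (k + N + 1)) =
        (1 / (2 : ℝ) ^ (k + N + 1)) *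
          ((2 : ℝ) * Real.log (a (k + N)) - Real.log (a (k + N + 1))) := by
      rw [pow_succ]; field_simp
    rw [key, abs_mul, abs_of_pos (by positivity : (0:ℝ) < 1 / (2 : ℝ) ^ (k + N + 1))]
    have habs2 : |2 * Real.log (a (k + N)) - Real.log (a (k + N + 1))| ≤ Real.log 2 := by
      rw [abs_sub_comm] at hlr
      push_cast at hlr
      exact hlr
    calc (1 / (2 : ℝ) ^ (k + N + 1)) * |2 * Real.log (a (k + N)) - Real.log (a (k + N + 1))|
        ≤ (1 / (2 : ℝ) ^ (k + N + 1)) * Real.log 2 :=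
          mul_le_mul_of_nonneg_left habs2 (by positivity)
      _ = ((1 / (2 : ℝ) ^ (N + 1)) * Real.log 2) * (1 / 2) ^ k := by
          rw [show k + N + 1 = (N + 1) + k from by omega, pow_add, div_pow, one_pow]
          ring
  have hc : CauchySeq (fun k => g (k + N)) :=
    cauchySeq_of_le_geometric (1 / 2) ((1 / (2 : ℝ) ^ (N + 1)) * Real.log 2)
      (by norm_num) hdist
  obtain ⟨G, hG⟩ := cauchySeq_tendsto_of_complete hc
  refine ⟨G, (tendsto_add_atTop_iff_nat N).mp hG, ?_⟩
  have hb := dist_le_of_le_geometric_of_tendsto₀ (1 / 2)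
    ((1 / (2 : ℝ) ^ (N + 1)) * Real.log 2) (by norm_num) hdist hG
  rw [Real.dist_eq] at hb
  simp only [Nat.zero_add] at hb
  have hgN : g N = (1 / (2 : ℝ) ^ N) * Real.log (a N) := by
    have h := hmax 0
    rw [Nat.zero_add] at h
    rw [hg]
    simp only [h]
  rw [hgN] at hb
  rw [abs_sub_comm]
  calc |(1 / (2 : ℝ) ^ N) * Real.log (a N) - G|
      ≤ (1 / (2 : ℝ) ^ (N + 1)) * Real.log 2 / (1 - 1 / 2) := hb
    _ = (1 / (2 : ℝ) ^ N) * Real.log 2 := by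
        rw [pow_succ]; field_simp; ring

theorem quadratic_green_asymptotics :
    ∃ C : ℝ, 0 ≤ C ∧ ∀ t : ℂ, 3 ≤ ‖t‖ → ∀ u ∈ ({0, 4} : Set ℂ),
      ∃ G : ℝ, Tendsto
        (fun n : ℕ => (1 / (2 : ℝ) ^ n) *
          Real.log (max (‖(fun z => z ^ 2 + t)^[n] u‖) 1))
        atTop (nhds G) ∧
      |G - (1 / 2) * Real.log ‖t‖| ≤ C := by
  classical
  refine ⟨10, by norm_num, ?_⟩
  intro t ht u hu
  have hlog2 : Real.log 2 < 0.6931471808 := Real.log_two_lt_d9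
  have hlog2' : 0 ≤ Real.log 2 := Real.log_nonneg one_le_two
  have ht0 : (0 : ℝ) < ‖t‖ := by linarith
  simp only [Set.mem_insert_iff, Set.mem_singleton_iff] at hu
  rcases hu with rfl | rfl
  · -- u = 0
    have h1 : (fun z : ℂ => z ^ 2 + t)^[1] (0 : ℂ) = t := by simp
    have h3 : 3 ≤ ‖(fun z : ℂ => z ^ 2 + t)^[1] (0 : ℂ)‖ := by rw [h1]; exact ht
    have htt : 2 * ‖t‖ ≤ ‖(fun z : ℂ => z ^ 2 + t)^[1] (0 : ℂ)‖ ^ 2 := by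
      rw [h1]; nlinarith
    obtain ⟨G, hG, hb⟩ := tail_conv t 0 1 h3 htt
    refine ⟨G, hG, ?_⟩
    rw [h1] at hb
    norm_num at hb
    have hb' := abs_le.mp hb
    rw [abs_le]
    constructor <;> [linarith [hb'.1]; linarith [hb'.2]]
  · -- u = 4
    by_cases h33 : 33 ≤ ‖t‖
    · -- |t| ≥ 33 : the orbit escapes immediately
      have h1 : (fun z : ℂ => z ^ 2 + t)^[1] (4 : ℂ) = 16 + t := by norm_num
      have h16 : ‖(16 : ℂ)‖ = 16 := by
        rw [show ((16 : ℂ)) = ((16 : ℝ) : ℂ) by norm_num, Complex.norm_real]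
        norm_num
      have hlo : ‖t‖ - 16 ≤ ‖16 + t‖ := by
        have h := norm_sub_le_norm_add t 16
        rw [h16, add_comm] at h
        exact h
      have hhi : ‖16 + t‖ ≤ 16 + ‖t‖ := by
        have h := norm_add_le 16 t
        rw [h16] at h
        exact h
      have h3 : 3 ≤ ‖(fun z : ℂ => z ^ 2 + t)^[1] (4 : ℂ)‖ := by
        rw [h1]; linarith
      have htt : 2 * ‖t‖ ≤
          ‖(fun z : ℂ => z ^ 2 + t)^[1] (4 : ℂ)‖ ^ 2 := by
        rw [h1]; nlinarith
      obtain ⟨G, hG, hb⟩ := tail_conv t 4 1 h3 htt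
      refine ⟨G, hG, ?_⟩
      rw [h1] at hb
      norm_num at hb
      have hlr : |Real.log (‖16 + t‖) - Real.log (‖t‖)| ≤ Real.log 2 :=
        log_ratio_le (by linarith) ht0 (by linarith) (by linarith)
      have hb' := abs_le.mp hb
      have hlr' := abs_le.mp hlr
      rw [abs_le]
      constructor <;> [linarith [hb'.1, hlr'.1]; linarith [hb'.2, hlr'.2]]
    · -- 3 ≤ |t| < 33
      push_neg at h33
      set f : ℂ → ℂ := fun z => z ^ 2 + t with hf
      set a : ℕ → ℝ := fun n => ‖f^[n] (4 : ℂ)‖ with ha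
      have L33 : Real.log (‖t‖) ≤ 6 * Real.log 2 := by
        calc Real.log (‖t‖) ≤ Real.log 64 := Real.log_le_log ht0 (by linarith)
          _ = 6 * Real.log 2 := by
              rw [show (64 : ℝ) = 2 ^ 6 by norm_num, Real.log_pow]; norm_num
      have Lt0 : 0 ≤ Real.log (‖t‖) := Real.log_nonneg (by linarith)
      have hsmall : ∀ m : ℕ, ¬(3 ≤ a m ∧ 2 * ‖t‖ ≤ a m ^ 2) → a m < 9 := by
        intro m hm
        by_cases h3m : 3 ≤ a m
        · have h2 : a m ^ 2 < 2 * ‖t‖ := by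
            by_contra hcon
            exact hm ⟨h3m, le_of_not_gt hcon⟩
          have : a m ^ 2 < 9 ^ 2 := by nlinarith
          exact lt_of_pow_lt_pow_left₀ 2 (by norm_num) this
        · linarith [lt_of_not_ge h3m]
      by_cases hex : ∃ n, 3 ≤ a n ∧ 2 * ‖t‖ ≤ a n ^ 2
      · set N := Nat.find hex with hNdef
        have hN := Nat.find_spec hex
        obtain ⟨G, hG, hb⟩ := tail_conv t 4 N hN.1 hN.2
        refine ⟨G, hG, ?_⟩
        -- bound a N ≤ 114
        have haN : a N ≤ 114 := by
          rcases Nat.eq_zero_or_pos N with hN0 | hN1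
          · rw [hN0]
            have : a 0 = 4 := by
              simp only [ha, Function.iterate_zero, id_eq]
              rw [show ((4 : ℂ)) = ((4 : ℝ) : ℂ) by norm_num, Complex.norm_real]
              norm_num
            rw [this]; norm_num
          · have hprev : ¬(3 ≤ a (N - 1) ∧ 2 * ‖t‖ ≤ a (N - 1) ^ 2) :=
              Nat.find_min hex (by omega)
            have h9 : a (N - 1) < 9 := hsmall _ hprev
            have hstep : a N ≤ a (N - 1) ^ 2 + ‖t‖ := by
              have hNe : N = (N - 1) + 1 := by omega
              rw [hNe]
              have : a ((N - 1) + 1) = ‖(f^[N - 1] (4 : ℂ)) ^ 2 + t‖ := by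
                simp only [ha, Function.iterate_succ_apply', hf]
              rw [this]
              calc ‖(f^[N - 1] (4 : ℂ)) ^ 2 + t‖
                  ≤ ‖(f^[N - 1] (4 : ℂ)) ^ 2‖ + ‖t‖ :=
                    norm_add_le _ _
                _ = a (N - 1) ^ 2 + ‖t‖ := by rw [norm_pow]
            have ha0 : 0 ≤ a (N - 1) := norm_nonneg _
            nlinarith
        have L114 : Real.log (a N) ≤ 7 * Real.log 2 := by
          calc Real.log (a N) ≤ Real.log 128 :=
                Real.log_le_log (by linarith [hN.1]) (by linarith)
            _ = 7 * Real.log 2 := by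
                rw [show (128 : ℝ) = 2 ^ 7 by norm_num, Real.log_pow]; norm_num
        have LaN0 : 0 ≤ Real.log (a N) := Real.log_nonneg (by linarith [hN.1])
        have hpow1 : (0 : ℝ) < 1 / (2 : ℝ) ^ N := by positivity
        have hpow2 : 1 / (2 : ℝ) ^ N ≤ 1 := by
          rw [div_le_one (by positivity)]
          exact one_le_pow₀ (by norm_num)
        have hx0 : 0 ≤ (1 / (2 : ℝ) ^ N) * Real.log (a N) := by positivity
        have hx1 : (1 / (2 : ℝ) ^ N) * Real.log (a N) ≤ 7 * Real.log 2 := by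
          calc (1 / (2 : ℝ) ^ N) * Real.log (a N) ≤ 1 * Real.log (a N) :=
                mul_le_mul_of_nonneg_right hpow2 LaN0
            _ = Real.log (a N) := one_mul _
            _ ≤ 7 * Real.log 2 := L114
        have hlog2N : (1 / (2 : ℝ) ^ N) * Real.log 2 ≤ Real.log 2 := by
          calc (1 / (2 : ℝ) ^ N) * Real.log 2 ≤ 1 * Real.log 2 :=
                mul_le_mul_of_nonneg_right hpow2 hlog2'
            _ = Real.log 2 := one_mul _
        have hb' := abs_le.mp hb
        rw [abs_le]
        constructor <;> [linarith [hb'.1]; linarith [hb'.2]]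
      · -- the orbit never escapes: the bounded case, G = 0
        push_neg at hex
        refine ⟨0, ?_, ?_⟩
        · apply squeeze_zero (g := fun n : ℕ => Real.log 9 * (1 / 2) ^ n)
          · intro n
            apply mul_nonneg (by positivity)
            exact Real.log_nonneg (le_max_right _ _)
          · intro n
            have h9 : a n < 9 := hsmall n fun h => absurd h.2 (not_le.mpr (hex n h.1))
            have hmax9 : max (a n) 1 ≤ 9 := max_le (le_of_lt h9) (by norm_num)
            have hlog : Real.log (max (a n) 1) ≤ Real.log 9 :=
              Real.log_le_log (lt_of_lt_of_le one_pos (le_max_right _ _)) hmax9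
            calc (1 / (2 : ℝ) ^ n) * Real.log (max (‖f^[n] (4 : ℂ)‖) 1)
                ≤ (1 / (2 : ℝ) ^ n) * Real.log 9 := by
                  apply mul_le_mul_of_nonneg_left _ (by positivity)
                  exact hlog
              _ = Real.log 9 * (1 / 2) ^ n := by rw [one_div_pow]; ring
          · have := (tendsto_pow_atTop_nhds_zero_of_lt_one
              (by norm_num : (0:ℝ) ≤ 1 / 2) (by norm_num : (1:ℝ)/2 < 1)).const_mul
              (Real.log 9)
            simpa using this
        · rw [zero_sub, abs_neg, abs_of_nonneg (by positivity)]
          linarith
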